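/- The KL divergence rate of X from its P-lifting is at most that from its μ-lifting: Σ_{i,j} μ_i P_{ij} log(P_{ij}/P̂_{ij}) ≤ Σ_{i,j} μ_i P_{ij} log(P_{ij}/P'_{ij}), where P̂ is the P-lifting and P' = V Q U^μ the μ-lifting; the difference equals I(X_n; X_{n-1}) − I(Y_n; X_{n-1}) ≥ 0. -/

import Mathlib

open Finset

lemma sub_le_mul_log_div {x y : ℝ} (hx : 0 ≤ x) (hy : 0 < y) :
    x - y ≤ x * Real.log (x / y) := by
  rcases eq_or_lt_of_le hx with h | hx'
  · rw [← h]; simp; positivity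
  · have h1 : Real.log (y / x) ≤ y / x - 1 :=
      Real.log_le_sub_one_of_pos (by positivity)
    have h2 : Real.log (x / y) = - Real.log (y / x) := by
      rw [← Real.log_inv]; congr 1; field_simp
    have h3 : x * (y / x - 1) = y - x := by field_simp
    nlinarith [mul_le_mul_of_nonneg_left h1 hx'.le]

lemma log_sum_ineq {ι : Type*} (s : Finset ι) (a b : ι → ℝ)
    (ha : ∀ i ∈ s, 0 ≤ a i) (hb : ∀ i ∈ s, 0 < b i) :
    (∑ i ∈ s, a i) * Real.log ((∑ i ∈ s, a i) / (∑ i ∈ s, b i))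
      ≤ ∑ i ∈ s, a i * Real.log (a i / b i) := by
  rcases s.eq_empty_or_nonempty with rfl | hs
  · simp
  have hBpos : 0 < ∑ i ∈ s, b i := Finset.sum_pos hb hs
  have hAnn : 0 ≤ ∑ i ∈ s, a i := Finset.sum_nonneg ha
  rcases eq_or_lt_of_le hAnn with h0 | hApos
  · have hall : ∀ i ∈ s, a i = 0 :=
      (Finset.sum_eq_zero_iff_of_nonneg ha).1 h0.symm
    rw [← h0]
    simp only [zero_mul]
    exact Finset.sum_nonneg fun i hi => by rw [hall i hi]; simp
  · set A := ∑ i ∈ s, a i with hA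
    set B := ∑ i ∈ s, b i with hB
    have ht : 0 < A / B := div_pos hApos hBpos
    have key : ∀ i ∈ s, a i - (A / B) * b i
        ≤ a i * Real.log (a i / b i) - a i * Real.log (A / B) := by
      intro i hi
      rcases eq_or_lt_of_le (ha i hi) with h | hai
      · rw [← h]; simp
        have := hb i hi
        nlinarith
      · have h1 : a i - (A / B) * b i ≤ a i * Real.log (a i / ((A / B) * b i)) :=
          sub_le_mul_log_div (ha i hi) (mul_pos ht (hb i hi))
        have h2 : Real.log (a i / ((A / B) * b i))
            = Real.log (a i / b i) - Real.log (A / B) := by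
          rw [show a i / ((A / B) * b i) = (a i / b i) / (A / B) by
            field_simp]
          rw [Real.log_div (div_pos hai (hb i hi)).ne' ht.ne']
        rw [h2] at h1
        nlinarith
    have hsum := Finset.sum_le_sum key
    have e1 : ∑ i ∈ s, (a i - A / B * b i) = A - (A / B) * B := by
      rw [Finset.sum_sub_distrib, ← Finset.mul_sum]
    have e2 : ∑ i ∈ s, (a i * Real.log (a i / b i) - a i * Real.log (A / B))
        = (∑ i ∈ s, a i * Real.log (a i / b i)) - A * Real.log (A / B) := by
      rw [Finset.sum_sub_distrib, ← Finset.sum_mul]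
    rw [e1, e2] at hsum
    have e3 : A - (A / B) * B = 0 := by field_simp; ring
    linarith

/-- The KL divergence rate of `X` from its `P`-lifting is at most that from its
`μ`-lifting, the difference being `I(X_n; X_{n-1}) − I(Y_n; X_{n-1}) ≥ 0`. -/
theorem kldr_P_lifting_le_mu_lifting {𝒳 𝒴 : Type*} [Fintype 𝒳] [Fintype 𝒴]
    [DecidableEq 𝒴] [Nonempty 𝒳]
    (P : 𝒳 → 𝒳 → ℝ) (μ : 𝒳 → ℝ) (g : 𝒳 → 𝒴)
    (hg : Function.Surjective g)
    (hPnn : ∀ i j, 0 ≤ P i j) (hProw : ∀ i, ∑ j, P i j = 1)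
    (hμpos : ∀ i, 0 < μ i) (hμsum : ∑ i, μ i = 1)
    (hμinv : ∀ j, ∑ i, μ i * P i j = μ j)
    (R : 𝒳 → 𝒴 → ℝ)
    (hR : ∀ i l, R i l = ∑ j ∈ univ.filter (fun j => g j = l), P i j)
    (ν : 𝒴 → ℝ)
    (hν : ∀ k, ν k = ∑ i ∈ univ.filter (fun i => g i = k), μ i)
    (Q : 𝒴 → 𝒴 → ℝ)
    (hQ : ∀ k l, Q k l =
      (∑ i ∈ univ.filter (fun i => g i = k),
        ∑ j ∈ univ.filter (fun j => g j = l), μ i * P i j) / ν k)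
    -- μ-lifting
    (P' : 𝒳 → 𝒳 → ℝ)
    (hP' : ∀ i j, P' i j =
      (μ j / ∑ k ∈ univ.filter (fun k => g k = g j), μ k) * Q (g i) (g j))
    -- P-lifting
    (Phat : 𝒳 → 𝒳 → ℝ)
    (hPhat : ∀ i j, Phat i j =
      if 0 < R i (g j) then P i j / R i (g j) * Q (g i) (g j)
      else Q (g i) (g j) / (univ.filter (fun k => g k = g j)).card) :
    ((∑ i, ∑ j, μ i * P i j * Real.log (P i j / P' i j))
        - (∑ i, ∑ j, μ i * P i j * Real.log (P i j / Phat i j))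
      = (∑ i, ∑ j, μ i * P i j * Real.log (P i j / μ j))
        - (∑ i, ∑ l, μ i * R i l * Real.log (R i l / ν l))) ∧
    (0 ≤ (∑ i, ∑ j, μ i * P i j * Real.log (P i j / μ j))
        - (∑ i, ∑ l, μ i * R i l * Real.log (R i l / ν l))) ∧
    (∑ i, ∑ j, μ i * P i j * Real.log (P i j / Phat i j)
      ≤ ∑ i, ∑ j, μ i * P i j * Real.log (P i j / P' i j)) := by
  have hνpos : ∀ k, 0 < ν k := by
    intro k
    obtain ⟨i, rfl⟩ := hg k
    rw [hν]
    exact Finset.sum_pos (fun j _ => hμpos j)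
      ⟨i, Finset.mem_filter.2 ⟨Finset.mem_univ i, rfl⟩⟩
  -- pointwise key identity
  have key : ∀ i j,
      μ i * P i j * Real.log (P i j / P' i j)
        - μ i * P i j * Real.log (P i j / Phat i j)
      = μ i * P i j * Real.log (P i j / μ j)
        - μ i * P i j * Real.log (R i (g j) / ν (g j)) := by
    intro i j
    rcases eq_or_lt_of_le (hPnn i j) with h | h
    · rw [← h]; ring
    · have hRp : 0 < R i (g j) := lt_of_lt_of_le h (by
        rw [hR]
        exact Finset.single_le_sum (fun j' _ => hPnn i j')
          (Finset.mem_filter.2 ⟨Finset.mem_univ _, rfl⟩))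
      have hQp : 0 < Q (g i) (g j) := by
        rw [hQ]
        refine div_pos ?_ (hνpos (g i))
        refine Finset.sum_pos'
          (fun i' _ => Finset.sum_nonneg fun j' _ =>
            mul_nonneg (hμpos i').le (hPnn _ _))
          ⟨i, Finset.mem_filter.2 ⟨Finset.mem_univ _, rfl⟩, ?_⟩
        exact Finset.sum_pos'
          (fun j' _ => mul_nonneg (hμpos i).le (hPnn _ _))
          ⟨j, Finset.mem_filter.2 ⟨Finset.mem_univ _, rfl⟩, mul_pos (hμpos i) h⟩
      have hνp := hνpos (g j)
      have hμj := hμpos j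
      rw [hP' i j, hPhat i j, if_pos hRp, ← hν (g j)]
      rw [Real.log_div h.ne' (mul_pos (div_pos hμj hνp) hQp).ne',
          Real.log_div h.ne' (mul_pos (div_pos h hRp) hQp).ne',
          Real.log_mul (div_pos hμj hνp).ne' hQp.ne',
          Real.log_mul (div_pos h hRp).ne' hQp.ne',
          Real.log_div hμj.ne' hνp.ne',
          Real.log_div h.ne' hRp.ne',
          Real.log_div h.ne' hμj.ne',
          Real.log_div hRp.ne' hνp.ne']
      ring
  -- fiberwise rewriting of the coarse term
  have hfib : ∀ i, ∑ j, μ i * P i j * Real.log (R i (g j) / ν (g j))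
      = ∑ l, μ i * R i l * Real.log (R i l / ν l) := by
    intro i
    rw [← Finset.sum_fiberwise_of_maps_to (fun j _ => Finset.mem_univ (g j))
      (fun j => μ i * P i j * Real.log (R i (g j) / ν (g j)))]
    refine Finset.sum_congr rfl fun l _ => ?_
    have hc : ∑ j ∈ univ.filter (fun j => g j = l),
          μ i * P i j * Real.log (R i (g j) / ν (g j))
        = ∑ j ∈ univ.filter (fun j => g j = l),
          μ i * P i j * Real.log (R i l / ν l) :=
      Finset.sum_congr rfl fun j hj => by rw [(Finset.mem_filter.1 hj).2]
    rw [hc, ← Finset.sum_mul, ← Finset.mul_sum, ← hR i l]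
  have e : ∀ i,
      (∑ j, μ i * P i j * Real.log (P i j / P' i j))
        - (∑ j, μ i * P i j * Real.log (P i j / Phat i j))
      = (∑ j, μ i * P i j * Real.log (P i j / μ j))
        - (∑ l, μ i * R i l * Real.log (R i l / ν l)) := by
    intro i
    rw [← hfib i, ← Finset.sum_sub_distrib, ← Finset.sum_sub_distrib]
    exact Finset.sum_congr rfl fun j _ => key i j
  have part1 :
      (∑ i, ∑ j, μ i * P i j * Real.log (P i j / P' i j))
        - (∑ i, ∑ j, μ i * P i j * Real.log (P i j / Phat i j))
      = (∑ i, ∑ j, μ i * P i j * Real.log (P i j / μ j))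
        - (∑ i, ∑ l, μ i * R i l * Real.log (R i l / ν l)) := by
    rw [← Finset.sum_sub_distrib, ← Finset.sum_sub_distrib]
    exact Finset.sum_congr rfl fun i _ => e i
  have pos : ∀ i : 𝒳, ∑ l, μ i * R i l * Real.log (R i l / ν l)
      ≤ ∑ j, μ i * P i j * Real.log (P i j / μ j) := by
    intro i
    rw [← Finset.sum_fiberwise_of_maps_to (fun j _ => Finset.mem_univ (g j))
      (fun j => μ i * P i j * Real.log (P i j / μ j))]
    refine Finset.sum_le_sum fun l _ => ?_
    have hls := log_sum_ineq (univ.filter (fun j => g j = l))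
      (fun j => P i j) (fun j => μ j) (fun j _ => hPnn i j) (fun j _ => hμpos j)
    rw [← hR i l, ← hν l] at hls
    have h2 := mul_le_mul_of_nonneg_left hls (hμpos i).le
    rw [Finset.mul_sum] at h2
    calc μ i * R i l * Real.log (R i l / ν l)
        = μ i * (R i l * Real.log (R i l / ν l)) := by ring
      _ ≤ ∑ j ∈ univ.filter (fun j => g j = l),
            μ i * (P i j * Real.log (P i j / μ j)) := h2
      _ = ∑ j ∈ univ.filter (fun j => g j = l),
            μ i * P i j * Real.log (P i j / μ j) :=
          Finset.sum_congr rfl fun j _ => by ring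
  have part2 : 0 ≤ (∑ i, ∑ j, μ i * P i j * Real.log (P i j / μ j))
      - (∑ i, ∑ l, μ i * R i l * Real.log (R i l / ν l)) :=
    sub_nonneg.2 (Finset.sum_le_sum fun i _ => pos i)
  exact ⟨part1, part2, by linarith⟩
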